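/- For every real x, sup over θ < 1 of (θx + θ + log(1-θ)) equals x - log(x+1) if x > -1, and equals +∞ if x ≤ -1. -/

import Mathlib

open Real

/-- Legendre transform of `Λ_C(θ) = -θ - log(1-θ)` (for `θ < 1`):
`sup_{θ<1} (θx + θ + log(1-θ))` equals `x - log(x+1)` if `x > -1` and `+∞` if `x ≤ -1`. -/
theorem legendre_transform_C (x : ℝ) :
    (⨆ θ : {t : ℝ // t < 1}, ((θ.1 * x + θ.1 + Real.log (1 - θ.1) : ℝ) : EReal)) =
      if -1 < x then ((x - Real.log (x + 1) : ℝ) : EReal) else ⊤ := by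
  split_ifs with hx
  · have hx1 : (0:ℝ) < x + 1 := by linarith
    apply le_antisymm
    · refine iSup_le fun θ => ?_
      rw [EReal.coe_le_coe_iff]
      have hθ1 : (0:ℝ) < 1 - θ.1 := by linarith [θ.2]
      have hu : 0 < (1 - θ.1) * (x + 1) := mul_pos hθ1 hx1
      have hlog : Real.log ((1 - θ.1) * (x + 1)) ≤ (1 - θ.1) * (x + 1) - 1 :=
        Real.log_le_sub_one_of_pos hu
      rw [Real.log_mul (ne_of_gt hθ1) (ne_of_gt hx1)] at hlog
      nlinarith [hlog]
    · have hθ : x / (x + 1) < 1 := by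
        rw [div_lt_one hx1]; linarith
      refine le_trans (le_of_eq ?_)
        (le_iSup (fun θ : {t : ℝ // t < 1} =>
          ((θ.1 * x + θ.1 + Real.log (1 - θ.1) : ℝ) : EReal)) ⟨x / (x+1), hθ⟩)
      rw [EReal.coe_eq_coe_iff]
      have h1 : 1 - x / (x + 1) = 1 / (x + 1) := by field_simp; ring
      rw [h1, Real.log_div one_ne_zero (ne_of_gt hx1), Real.log_one]
      field_simp
      ring
  · push_neg at hx
    rw [iSup_eq_top]
    intro b hb
    induction b using EReal.rec with
    | bot => exact ⟨⟨0, by norm_num⟩, EReal.bot_lt_coe _⟩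
    | coe r =>
      have he : (1:ℝ) < Real.exp (|r| + 1) := by
        calc (1:ℝ) < Real.exp 1 := by
              have := Real.add_one_le_exp (1:ℝ); linarith
          _ ≤ Real.exp (|r| + 1) := Real.exp_le_exp.mpr (by linarith [abs_nonneg r])
      refine ⟨⟨1 - Real.exp (|r| + 1), by linarith⟩, ?_⟩
      rw [EReal.coe_lt_coe_iff]
      have hlog : Real.log (1 - (1 - Real.exp (|r| + 1))) = |r| + 1 := by
        simp [Real.log_exp]
      simp only [hlog]
      have h1 : (1 - Real.exp (|r| + 1)) * (x + 1) ≥ 0 :=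
        by nlinarith
      nlinarith [abs_nonneg r, le_abs_self r]
    | top => exact absurd hb (lt_irrefl _)
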